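/- In the polynomial ring ℚ[a,b,s,t] one has the identity 27·( 4·A(a,b,s,t)³ + 27·B(a,b,s,t)² ) = (4a³ + 27b²)·( 3s⁴ + 6as²t² + 12bst³ − a²t⁴ )³. Equivalently, with Δ(x,y) := 16(−4x³−27y²), the discriminant of the new curve satisfies 27·Δ(A(a,b,s,t), B(a,b,s,t)) = Δ(a,b)·(3s⁴ + 6as²t² + 12bst³ − a²t⁴)³, so the discriminant locus of the family X(s,t) is cut out by the quartic 3s⁴ + 6as²t² + 12bst³ − a²t⁴. -/
import Mathlib


open MvPolynomial

noncomputable section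

/-- The new coefficient `A(a,b,s,t)`, in any commutative `ℚ`-algebra. -/
def Acoef {R : Type*} [CommRing R] [Algebra ℚ R] (a b s t : R) : R :=
  algebraMap ℚ R (1 / 3) *
    (3 * a * s ^ 4 + 18 * b * s ^ 3 * t - 6 * a ^ 2 * s ^ 2 * t ^ 2 - 6 * a * b * s * t ^ 3
      - (a ^ 3 + 9 * b ^ 2) * t ^ 4)

/-- The new coefficient `B(a,b,s,t)`, in any commutative `ℚ`-algebra. -/
def Bcoef {R : Type*} [CommRing R] [Algebra ℚ R] (a b s t : R) : R :=
  algebraMap ℚ R (1 / 9) *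
    (9 * b * s ^ 6 - 12 * a ^ 2 * s ^ 5 * t - 45 * a * b * s ^ 4 * t ^ 2
      - 90 * b ^ 2 * s ^ 3 * t ^ 3 + 15 * a ^ 2 * b * s ^ 2 * t ^ 4
      - 2 * a * (2 * a ^ 3 + 9 * b ^ 2) * s * t ^ 5 - 3 * b * (a ^ 3 + 6 * b ^ 2) * t ^ 6)

/-- The indeterminates `a, b, s, t` of `ℚ[a,b,s,t]`. -/
abbrev a : MvPolynomial (Fin 4) ℚ := X 0
abbrev b : MvPolynomial (Fin 4) ℚ := X 1
abbrev s : MvPolynomial (Fin 4) ℚ := X 2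
abbrev t : MvPolynomial (Fin 4) ℚ := X 3

/-- in `ℚ[a,b,s,t]` one has
`27·(4·A(a,b,s,t)³ + 27·B(a,b,s,t)²) = (4a³ + 27b²)·(3s⁴ + 6as²t² + 12bst³ − a²t⁴)³`. -/
theorem stmt_8 :
    27 * (4 * Acoef a b s t ^ 3 + 27 * Bcoef a b s t ^ 2) =
      (4 * a ^ 3 + 27 * b ^ 2) *
        (3 * s ^ 4 + 6 * a * s ^ 2 * t ^ 2 + 12 * b * s * t ^ 3 - a ^ 2 * t ^ 4) ^ 3 := by
  have h1 : (C ((1:ℚ)/3) : MvPolynomial (Fin 4) ℚ) ^ 3 * 27 = 1 := by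
    rw [show (27 : MvPolynomial (Fin 4) ℚ) = C 27 from (map_ofNat C 27).symm, ← C_pow, ← C_mul]
    norm_num
  have h2 : (C ((1:ℚ)/9) : MvPolynomial (Fin 4) ℚ) ^ 2 * 81 = 1 := by
    rw [show (81 : MvPolynomial (Fin 4) ℚ) = C 81 from (map_ofNat C 81).symm, ← C_pow, ← C_mul]
    norm_num
  simp only [Acoef, Bcoef, algebraMap_eq]
  linear_combination
    (4 * (3 * a * s ^ 4 + 18 * b * s ^ 3 * t - 6 * a ^ 2 * s ^ 2 * t ^ 2 - 6 * a * b * s * t ^ 3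
      - (a ^ 3 + 9 * b ^ 2) * t ^ 4) ^ 3) * h1 +
    (9 * (9 * b * s ^ 6 - 12 * a ^ 2 * s ^ 5 * t - 45 * a * b * s ^ 4 * t ^ 2
      - 90 * b ^ 2 * s ^ 3 * t ^ 3 + 15 * a ^ 2 * b * s ^ 2 * t ^ 4
      - 2 * a * (2 * a ^ 3 + 9 * b ^ 2) * s * t ^ 5 - 3 * b * (a ^ 3 + 6 * b ^ 2) * t ^ 6) ^ 2) * h2

end
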